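/- Let $(R,\mathfrak{m})$ be a two-dimensional regular local ring with infinite residue field and $I$ an $\mathfrak{m}$-primary ideal. Then $\mathfrak{m}I : x = I$ for some $x \in \mathfrak{m}$ if and only if $I : x = I : \mathfrak{m}$ for some $x \in \mathfrak{m} \setminus \mathfrak{m}^2$. -/

import Mathlib

open Ideal IsLocalRing Submodule

section Aux

variable {R : Type*} [CommRing R]

/-- A Noetherian module over a local ring killed by the maximal ideal is Artinian. -/
lemma aux_artinian_of_killed {M : Type*} [AddCommGroup M] [Module R M] [IsLocalRing R]
    [IsNoetherian R M] (h : ∀ r ∈ maximalIdeal R, ∀ x : M, r • x = 0) :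
    IsArtinian R M := by
  have htors : Module.IsTorsionBySet R M (maximalIdeal R : Set R) :=
    fun x a => h a.1 a.2 x
  haveI : (maximalIdeal R).IsMaximal := IsLocalRing.maximalIdeal.isMaximal R
  letI : Module (R ⧸ maximalIdeal R) M := htors.module
  haveI : IsScalarTower R (R ⧸ maximalIdeal R) M := htors.isScalarTower
  haveI : IsNoetherian (R ⧸ maximalIdeal R) M := isNoetherian_of_tower R inferInstance
  haveI : Module.Finite (R ⧸ maximalIdeal R) M := ⟨IsNoetherian.noetherian ⊤⟩
  haveI : IsArtinianRing (R ⧸ maximalIdeal R) := by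
    letI := Ideal.Quotient.field (maximalIdeal R)
    infer_instance
  haveI : IsArtinian (R ⧸ maximalIdeal R) M := isArtinian_of_fg_of_artinian'
  rw [isArtinian_iff]
  have key : ∀ N : Submodule R M, ∃ N' : Submodule (R ⧸ maximalIdeal R) M,
      (N' : Set M) = (N : Set M) := by
    intro N
    have hsmul : ∀ (c : R ⧸ maximalIdeal R) (x : M), x ∈ N → c • x ∈ N := by
      intro c x hx
      obtain ⟨r, rfl⟩ := Ideal.Quotient.mk_surjective c
      have hs : (Ideal.Quotient.mk (maximalIdeal R) r) • x = r • x := by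
        rw [← Ideal.Quotient.algebraMap_eq, algebraMap_smul]
      rw [hs]
      exact N.smul_mem r hx
    exact ⟨{ toAddSubmonoid := N.toAddSubmonoid,
             smul_mem' := fun c {x} hx => hsmul c x hx }, rfl⟩
  choose F hF using key
  have hle : ∀ a b : Submodule R M, F a ≤ F b ↔ a ≤ b := by
    intro a b
    rw [← SetLike.coe_subset_coe, hF, hF, SetLike.coe_subset_coe]
  have hwf : WellFounded ((· < ·) : Submodule (R ⧸ maximalIdeal R) M →
      Submodule (R ⧸ maximalIdeal R) M → Prop) :=
    (isArtinian_iff _ _).mp ‹_›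
  exact (RelEmbedding.mk ⟨F, fun a b hab => le_antisymm
      ((hle a b).mp hab.le) ((hle b a).mp hab.ge)⟩
    (by intro a b; simp only [Function.Embedding.coeFn_mk, lt_iff_le_not_ge, hle]; exact and_congr (hle a b) (not_congr (hle b a)))).wellFounded hwf

/-- The quotient of a Noetherian local ring by a power of the maximal ideal is Artinian. -/
lemma aux_artinian_quot [IsNoetherianRing R] [IsLocalRing R] (N : ℕ) :
    IsArtinian R (R ⧸ (maximalIdeal R ^ N : Ideal R)) := by
  induction N with
  | zero =>
    have hsub : Subsingleton (R ⧸ (maximalIdeal R ^ 0 : Ideal R)) := by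
      constructor
      intro a b
      obtain ⟨a, rfl⟩ := Submodule.Quotient.mk_surjective _ a
      obtain ⟨b, rfl⟩ := Submodule.Quotient.mk_surjective _ b
      rw [Submodule.Quotient.eq]
      rw [pow_zero]
      simp
    haveI : Subsingleton (Submodule R (R ⧸ (maximalIdeal R ^ 0 : Ideal R))) := by
      infer_instance
    rw [isArtinian_iff]
    exact wellFounded_lt
  | succ n ih =>
    set P := R ⧸ (maximalIdeal R ^ (n + 1) : Ideal R)
    set S : Submodule R P :=
      Submodule.map (maximalIdeal R ^ (n + 1) : Ideal R).mkQ (maximalIdeal R ^ n : Ideal R) with hS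
    refine (isArtinian_iff_submodule_quotient S).mpr ⟨?_, ?_⟩
    · apply aux_artinian_of_killed
      intro r hr x
      obtain ⟨x, hx⟩ := x
      obtain ⟨t, ht, rfl⟩ := hx
      apply Subtype.ext
      show r • ((maximalIdeal R ^ (n + 1) : Ideal R).mkQ t) = 0
      rw [← map_smul, Submodule.mkQ_apply, Submodule.Quotient.mk_eq_zero]
      have : t * r ∈ maximalIdeal R ^ n * maximalIdeal R := Ideal.mul_mem_mul ht hr
      rw [smul_eq_mul, mul_comm]
      rwa [← pow_succ] at this
    · haveI := ih
      exact isArtinian_of_linearEquiv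
        (Submodule.quotientQuotientEquivQuotient _ _
          (Ideal.pow_le_pow_right (Nat.le_succ n))).symm

/-- A descending chain of ideals all containing a power of the maximal ideal stabilizes. -/
lemma aux_stabilize [IsNoetherianRing R] [IsLocalRing R] (N : ℕ) (E : ℕ → Ideal R)
    (hmono : ∀ n, E (n + 1) ≤ E n) (hE : ∀ n, maximalIdeal R ^ N ≤ E n) :
    ∃ n, E n ≤ E (n + 1) := by
  haveI := aux_artinian_quot (R := R) N
  have hanti : Antitone E := antitone_nat_of_succ_le hmono
  set mk := (maximalIdeal R ^ N : Ideal R).mkQ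
  let f : ℕ →o (Submodule R (R ⧸ (maximalIdeal R ^ N : Ideal R)))ᵒᵈ :=
    ⟨fun n => OrderDual.toDual (Submodule.map mk (E n)),
      fun a b hab => Submodule.map_mono (hanti hab)⟩
  obtain ⟨n, hn⟩ := IsArtinian.monotone_stabilizes f
  refine ⟨n, ?_⟩
  have h1 : Submodule.map mk (E n) = Submodule.map mk (E (n + 1)) :=
    congrArg OrderDual.ofDual (hn (n + 1) (Nat.le_succ n))
  have h2 : ∀ m, Submodule.comap mk (Submodule.map mk (E m)) = E m := by
    intro m
    rw [Submodule.comap_map_mkQ]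
    exact sup_eq_right.mpr (hE m)
  rw [← h2 n, ← h2 (n + 1), h1]

/-- The weak principal ideal theorem in the form we need: if there is a prime strictly
between `⊥` and the maximal ideal, then the maximal ideal is not contained in the
radical of a principal ideal `(v)`. -/
lemma aux_not_primary [IsDomain R] [IsNoetherianRing R] [IsLocalRing R]
    (q : Ideal R) (hq : q.IsPrime) (hq0 : q ≠ ⊥) (hqm : q < maximalIdeal R)
    (v : R) (hvm : v ∈ maximalIdeal R)
    (hv : maximalIdeal R ≤ (Ideal.span {v}).radical) : False := by
  haveI := hq
  have hvq : v ∉ q := by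
    intro hvq
    have hle : (Ideal.span {v}).radical ≤ q := by
      rw [← hq.radical]
      exact Ideal.radical_mono (Ideal.span_le.mpr (by simpa using hvq))
    exact absurd (le_antisymm hqm.le (hv.trans hle)) hqm.ne
  obtain ⟨N, hN⟩ : ∃ N, maximalIdeal R ^ N ≤ Ideal.span {v} :=
    Ideal.exists_pow_le_of_le_radical_of_fg hv (IsNoetherian.noetherian _)
  set A := Localization.AtPrime q
  set f := algebraMap R A with hf
  set Q : ℕ → Ideal R := fun n => Ideal.comap f (Ideal.map f (q ^ n)) with hQdef
  have hQmono : ∀ n, Q (n + 1) ≤ Q n := fun n =>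
    Ideal.comap_mono (Ideal.map_mono (Ideal.pow_le_pow_right (Nat.le_succ n)))
  obtain ⟨n, hn⟩ := aux_stabilize N (fun n => Q n ⊔ Ideal.span {v})
    (fun n => sup_le_sup_right (hQmono n) _)
    (fun n => le_sup_of_le_right hN)
  -- Nakayama step: Q n ≤ Q (n+1)
  have hstep : Q n ≤ Q (n + 1) ⊔ (maximalIdeal R) • Q n := by
    intro t ht
    have ht' : t ∈ Q (n + 1) ⊔ Ideal.span {v} := hn (Submodule.mem_sup_left ht)
    obtain ⟨g, hg, s, hs, rfl⟩ := Submodule.mem_sup.mp ht'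
    obtain ⟨r, rfl⟩ := Ideal.mem_span_singleton.mp hs
    have hrv : v * r ∈ Q n := by
      have := Submodule.sub_mem _ ht (hQmono n hg)
      simpa using this
    have hr : r ∈ Q n := by
      have h1 : f (v * r) ∈ Ideal.map f (q ^ n) := Ideal.mem_comap.mp hrv
      have hu : IsUnit (f v) := IsLocalization.map_units A (⟨v, hvq⟩ : q.primeCompl)
      rw [_root_.map_mul] at h1
      refine Ideal.mem_comap.mpr ?_
      have h2 := Ideal.mul_mem_left _ (↑hu.unit⁻¹) h1
      rwa [← mul_assoc, IsUnit.val_inv_mul, one_mul] at h2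
    exact Submodule.mem_sup.mpr ⟨g, hg, v * r, by
      rw [smul_eq_mul]; exact Ideal.mul_mem_mul hvm hr, rfl⟩
  have hQ : Q n ≤ Q (n + 1) := by
    have hnak := Submodule.sup_eq_sup_smul_of_le_smul_of_le_jacobson
      (I := maximalIdeal R) (J := ⊥) (N := (Q (n + 1) : Submodule R R)) (N' := Q n)
      (IsNoetherian.noetherian _) (maximalIdeal_le_jacobson ⊥) hstep
    rw [bot_smul, sup_bot_eq] at hnak
    exact le_trans le_sup_right hnak.le
  -- transfer to the localization and apply Nakayama there
  have hmap : Ideal.map f (q ^ (n + 1)) = Ideal.map f (q ^ n) := by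
    apply le_antisymm (Ideal.map_mono (Ideal.pow_le_pow_right (Nat.le_succ n)))
    have h1 : Ideal.map f (Q n) ≤ Ideal.map f (Q (n + 1)) := Ideal.map_mono hQ
    rwa [hQdef, IsLocalization.map_comap q.primeCompl A,
      IsLocalization.map_comap q.primeCompl A] at h1
  haveI : IsNoetherianRing A := IsLocalization.isNoetherianRing q.primeCompl A inferInstance
  have hAbot : Ideal.map f (q ^ n) = ⊥ := by
    apply Submodule.eq_bot_of_le_smul_of_le_jacobson_bot (IsLocalRing.maximalIdeal A)
      _ (IsNoetherian.noetherian _) _ (maximalIdeal_le_jacobson ⊥)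
    calc (Ideal.map f (q ^ n) : Ideal A) = Ideal.map f (q ^ (n + 1)) := hmap.symm
      _ = Ideal.map f q * Ideal.map f (q ^ n) := by
          rw [← Ideal.map_mul, pow_succ, mul_comm]
      _ ≤ IsLocalRing.maximalIdeal A * Ideal.map f (q ^ n) :=
          Ideal.mul_mono (le_of_eq (Localization.AtPrime.map_eq_maximalIdeal)) le_rfl
      _ = IsLocalRing.maximalIdeal A • Ideal.map f (q ^ n) := by rw [smul_eq_mul]
  obtain ⟨a, haq, ha0⟩ := Submodule.exists_mem_ne_zero_of_ne_bot hq0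
  have hmem : f a ^ (n + 1) ∈ Ideal.map f (q ^ (n + 1)) := by
    rw [← map_pow]
    exact Ideal.mem_map_of_mem f (Ideal.pow_mem_pow haq (n + 1))
  rw [hmap, hAbot] at hmem
  have hfa : f a = 0 :=
    pow_eq_zero_iff (Nat.succ_ne_zero n) |>.mp (Submodule.mem_bot A |>.mp hmem)
  have : a = 0 := IsLocalization.injective A q.primeCompl_le_nonZeroDivisors
    (by rw [hfa, map_zero])
  exact ha0 this

/-- A nonunit times a unit decomposition: regularity of `x` modulo `(v)` when
`(x, v)` generate the maximal ideal and the ring has a prime strictly between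
`⊥` and the maximal ideal. -/
lemma aux_reg [IsDomain R] [IsNoetherianRing R] [IsLocalRing R]
    (hdim : ringKrullDim R = 2) (x v : R)
    (hm : maximalIdeal R = Ideal.span {x, v}) :
    ∀ t : R, x * t ∈ Ideal.span {v} → t ∈ Ideal.span {v} := by
  -- extract a prime strictly between ⊥ and the maximal ideal from the dimension hypothesis
  obtain ⟨q, hq, hq0, hqm⟩ : ∃ q : Ideal R, q.IsPrime ∧ q ≠ ⊥ ∧ q < maximalIdeal R := by
    have hchain : ∃ p : LTSeries (PrimeSpectrum R), 2 ≤ p.length := by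
      by_contra h'
      push_neg at h'
      have hle : ringKrullDim R ≤ 1 := by
        rw [ringKrullDim, Order.krullDim_eq_iSup_length]
        rw [show ((1 : WithBot ℕ∞)) = ((1 : ℕ∞) : WithBot ℕ∞) from rfl]
        rw [WithBot.coe_le_coe]
        apply iSup_le
        intro p
        exact_mod_cast Nat.le_of_lt_succ (h' p)
      rw [hdim] at hle
      norm_num at hle
    obtain ⟨p, hp⟩ := hchain
    have h01 : p.toFun ⟨0, by omega⟩ < p.toFun ⟨1, by omega⟩ :=
      p.strictMono (by simp [Fin.lt_def])
    have h12 : p.toFun ⟨1, by omega⟩ < p.toFun ⟨2, by omega⟩ :=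
      p.strictMono (by simp [Fin.lt_def])
    refine ⟨(p.toFun ⟨1, by omega⟩).asIdeal, (p.toFun ⟨1, by omega⟩).2, ?_, ?_⟩
    · intro hbot
      have := (PrimeSpectrum.asIdeal_lt_asIdeal _ _).mpr h01
      rw [hbot] at this
      exact absurd this (by simp)
    · have hlt := (PrimeSpectrum.asIdeal_lt_asIdeal _ _).mpr h12
      exact lt_of_lt_of_le hlt (IsLocalRing.le_maximalIdeal (p.toFun ⟨2, by omega⟩).2.ne_top)
  have hvm : v ∈ maximalIdeal R := hm ▸ Ideal.subset_span (by simp)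
  have hxm : x ∈ maximalIdeal R := hm ▸ Ideal.subset_span (by simp)
  have hrad : ¬ maximalIdeal R ≤ (Ideal.span {v}).radical := fun h =>
    aux_not_primary q hq hq0 hqm v hvm h
  intro t ht
  set J := Ideal.span ({v} : Set R) with hJ
  have hJtop : J ≠ ⊤ := by
    intro h
    exact hrad (h ▸ (by simp [Ideal.radical_top] : maximalIdeal R ≤ (⊤ : Ideal R).radical))
  haveI : Nontrivial (R ⧸ J) := Ideal.Quotient.nontrivial_iff.mpr hJtop
  haveI : IsLocalRing (R ⧸ J) :=
    IsLocalRing.of_surjective' (Ideal.Quotient.mk J) Ideal.Quotient.mk_surjective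
  set xb := Ideal.Quotient.mk J x with hxb
  have hxpow : ∀ k : ℕ, xb ^ k ≠ 0 := by
    intro k hk
    apply hrad
    rw [hm]
    apply Ideal.span_le.mpr
    rintro w hw
    simp only [Set.mem_insert_iff, Set.mem_singleton_iff] at hw
    rcases hw with rfl | rfl
    · have hxk : w ^ k ∈ J := by
        rw [← Ideal.Quotient.eq_zero_iff_mem, map_pow]
        exact hk
      exact ⟨k, hxk⟩
    · exact Ideal.le_radical (Ideal.subset_span rfl)
  have hxbtop : Ideal.span {xb} ≠ ⊤ := by
    intro h
    have hu : IsUnit xb := Ideal.span_singleton_eq_top.mp h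
    obtain ⟨c, hc⟩ := isUnit_iff_exists_inv.mp hu
    obtain ⟨c', rfl⟩ := Ideal.Quotient.mk_surjective c
    have : x * c' - 1 ∈ J := by
      rw [← Ideal.Quotient.eq_zero_iff_mem, _root_.map_sub, _root_.map_mul, _root_.map_one,
        hc, sub_self]
    have h1 : (1 : R) ∈ maximalIdeal R := by
      have hJm : J ≤ maximalIdeal R := Ideal.span_le.mpr (by simpa using hvm)
      have h2 : x * c' - 1 ∈ maximalIdeal R := hJm this
      have h3 : x * c' ∈ maximalIdeal R := Ideal.mul_mem_right c' _ hxm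
      simpa using Submodule.sub_mem _ h3 h2
    exact (IsLocalRing.maximalIdeal.isMaximal R).ne_top ((Ideal.eq_top_iff_one _).mpr h1)
  have hKrull := Ideal.iInf_pow_eq_bot_of_isLocalRing (Ideal.span {xb}) hxbtop
  have hnon : ∀ c : R ⧸ J, c ∉ Ideal.span {xb} → IsUnit c := by
    intro c hc
    by_contra hcu
    apply hc
    obtain ⟨r, rfl⟩ := Ideal.Quotient.mk_surjective c
    have hr : r ∈ maximalIdeal R := by
      by_contra h'
      have hru : IsUnit r := by
        by_contra hnu
        exact h' ((IsLocalRing.mem_maximalIdeal r).mpr hnu)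
      exact hcu (hru.map (Ideal.Quotient.mk J))
    rw [hm] at hr
    obtain ⟨a, b, hab⟩ := Ideal.mem_span_pair.mp hr
    have hv0 : Ideal.Quotient.mk J v = 0 := Ideal.Quotient.eq_zero_iff_mem.mpr
      (Ideal.subset_span rfl)
    have : Ideal.Quotient.mk J r = Ideal.Quotient.mk J a * xb := by
      rw [← hab, _root_.map_add, _root_.map_mul, _root_.map_mul, hv0, mul_zero, add_zero, hxb]
    rw [this]
    exact Ideal.mul_mem_left _ _ (Ideal.subset_span rfl)
  have htb : xb * (Ideal.Quotient.mk J t) = 0 := by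
    rw [hxb, ← _root_.map_mul]
    exact Ideal.Quotient.eq_zero_iff_mem.mpr ht
  by_contra htJ
  have ht0 : Ideal.Quotient.mk J t ≠ 0 := fun h => htJ (Ideal.Quotient.eq_zero_iff_mem.mp h)
  have hex : ∃ k, Ideal.Quotient.mk J t ∈ (Ideal.span {xb}) ^ k ∧
      Ideal.Quotient.mk J t ∉ (Ideal.span {xb}) ^ (k + 1) := by
    by_contra h'
    push_neg at h'
    have hall : ∀ k, Ideal.Quotient.mk J t ∈ (Ideal.span {xb}) ^ k := by
      intro k
      induction k with
      | zero => simp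
      | succ k ih => exact h' k ih
    have : Ideal.Quotient.mk J t ∈ ⨅ i : ℕ, (Ideal.span {xb}) ^ i :=
      Submodule.mem_iInf _ |>.mpr hall
    rw [hKrull] at this
    exact ht0 (Submodule.mem_bot _ |>.mp this)
  obtain ⟨k, hk2, hk1⟩ := hex
  rw [Ideal.span_singleton_pow] at hk2
  obtain ⟨c, hc⟩ := Ideal.mem_span_singleton'.mp hk2
  have hcu : IsUnit c := by
    apply hnon
    intro hcs
    apply hk1
    obtain ⟨d, hd⟩ := Ideal.mem_span_singleton'.mp hcs
    rw [Ideal.span_singleton_pow, Ideal.mem_span_singleton']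
    exact ⟨d, by rw [← hc, ← hd]; ring⟩
  have hzero : xb ^ (k + 1) * c = 0 := by
    have : xb * (c * xb ^ k) = 0 := by rw [hc]; exact htb
    rw [pow_succ]
    calc xb ^ k * xb * c = xb * (c * xb ^ k) := by ring
      _ = 0 := this
  obtain ⟨u, rfl⟩ := hcu
  exact hxpow (k + 1) ((Units.mul_left_eq_zero u).mp hzero)

end Aux

/-- For an `𝔪`-primary ideal of a two-dimensional regular local ring with infinite
residue field: `I` is `𝔪`-full iff `I : x = I : 𝔪` for some `x ∈ 𝔪 \ 𝔪²`. -/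
theorem mFull_iff_colon_eq {R : Type*} [CommRing R] [IsDomain R] [IsNoetherianRing R]
    [IsLocalRing R] (hdim : ringKrullDim R = 2)
    (hreg : ∃ u v : R, maximalIdeal R = Ideal.span {u, v})
    (hres : Infinite (ResidueField R))
    (I : Ideal R) (hI : I.radical = maximalIdeal R) :
    (∃ x ∈ maximalIdeal R, (maximalIdeal R * I).colon (Ideal.span {x}) = I) ↔
      (∃ x ∈ maximalIdeal R, x ∉ maximalIdeal R ^ 2 ∧
        I.colon (Ideal.span {x}) = I.colon (maximalIdeal R)) := by
  have hmne : (maximalIdeal R : Ideal R) ≠ ⊤ := (IsLocalRing.maximalIdeal.isMaximal R).ne_top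
  have hInetop : I ≠ ⊤ := by
    intro h
    rw [h, Ideal.radical_top] at hI
    exact hmne hI.symm
  constructor
  · rintro ⟨x, hx, hcol⟩
    -- construct a socle element w ∈ (I : 𝔪) \ I
    obtain ⟨N, hN⟩ : ∃ N, maximalIdeal R ^ N ≤ I :=
      Ideal.exists_pow_le_of_le_radical_of_fg hI.ge (IsNoetherian.noetherian _)
    classical
    have hP : ∃ k, maximalIdeal R ^ k ≤ I := ⟨N, hN⟩
    set k := Nat.find hP with hkdef
    have hk : maximalIdeal R ^ k ≤ I := Nat.find_spec hP
    have hk0 : k ≠ 0 := by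
      intro h
      rw [h, pow_zero, Ideal.one_eq_top] at hk
      exact hInetop (top_le_iff.mp hk)
    have hklt : ¬ maximalIdeal R ^ (k - 1) ≤ I := Nat.find_min hP (by omega)
    obtain ⟨w, hw1, hw2⟩ := SetLike.not_le_iff_exists.mp hklt
    have hsoc : w ∈ I.colon (maximalIdeal R) := by
      rw [Submodule.mem_colon]
      intro p hp
      have h1 : w * p ∈ maximalIdeal R ^ (k - 1) * maximalIdeal R := Ideal.mul_mem_mul hw1 hp
      have h2 : maximalIdeal R ^ (k - 1) * maximalIdeal R = maximalIdeal R ^ k := by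
        rw [← pow_succ]
        congr 1
        omega
      rw [h2] at h1
      exact hk h1
    have hx2 : x ∉ maximalIdeal R ^ 2 := by
      intro h2
      apply hw2
      rw [← hcol, Ideal.mem_colon_span_singleton]
      rw [pow_two] at h2
      refine Submodule.mul_induction_on h2 (fun a ha b hb => ?_) (fun a b h1 h2 => ?_)
      · have hwb : w * b ∈ I := by
          have := Submodule.mem_colon.mp hsoc b hb
          rwa [smul_eq_mul] at this
        have : w * (a * b) = a * (w * b) := by ring
        rw [this]
        exact Ideal.mul_mem_mul ha hwb
      · rw [mul_add]
        exact Submodule.add_mem _ h1 h2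
    refine ⟨x, hx, hx2, le_antisymm ?_ ?_⟩
    · intro z hz
      rw [Ideal.mem_colon_span_singleton] at hz
      rw [Submodule.mem_colon]
      intro c hc
      have h1 : z * c ∈ (maximalIdeal R * I).colon (Ideal.span {x}) := by
        rw [Ideal.mem_colon_span_singleton]
        have : z * c * x = c * (z * x) := by ring
        rw [this]
        exact Ideal.mul_mem_mul hc hz
      rw [hcol] at h1
      rwa [smul_eq_mul]
    · intro z hz
      rw [Ideal.mem_colon_span_singleton]
      have := Submodule.mem_colon.mp hz x hx
      rwa [smul_eq_mul] at this
  · rintro ⟨x, hx, hx2, hcol⟩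
    obtain ⟨u, v, huv⟩ := hreg
    have hum : u ∈ maximalIdeal R := huv ▸ Ideal.subset_span (by simp)
    have hvm : v ∈ maximalIdeal R := huv ▸ Ideal.subset_span (by simp)
    have hxm : x ∈ Ideal.span ({u, v} : Set R) := huv ▸ hx
    obtain ⟨a, b, hab⟩ := Ideal.mem_span_pair.mp hxm
    -- find y such that 𝔪 = (x, y)
    obtain ⟨y, hxy⟩ : ∃ y, maximalIdeal R = Ideal.span {x, y} := by
      by_cases ha : IsUnit a
      · refine ⟨v, le_antisymm ?_ ?_⟩
        · rw [huv]
          apply Ideal.span_le.mpr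
          rintro w hw
          simp only [Set.mem_insert_iff, Set.mem_singleton_iff] at hw
          rcases hw with rfl | rfl
          · obtain ⟨ua, hua⟩ := ha
            have h1 : x - b * v ∈ Ideal.span ({x, v} : Set R) := by
              apply Submodule.sub_mem
              · exact Ideal.subset_span (by simp)
              · exact Ideal.mul_mem_left _ _ (Ideal.subset_span (by simp))
            have h2 : (↑ua⁻¹ : R) * (x - b * v) = w := by
              have : x - b * v = a * w := by rw [← hab]; ring
              rw [this, ← mul_assoc, ← hua, Units.inv_mul, one_mul]
            rw [← h2]
            exact Ideal.mul_mem_left _ _ h1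
          · exact Ideal.subset_span (by simp)
        · apply Ideal.span_le.mpr
          rintro w hw
          simp only [Set.mem_insert_iff, Set.mem_singleton_iff] at hw
          rcases hw with rfl | rfl
          · exact hx
          · exact hvm
      · have hb : IsUnit b := by
          by_contra hb
          apply hx2
          have ham : a ∈ maximalIdeal R := (IsLocalRing.mem_maximalIdeal a).mpr ha
          have hbm : b ∈ maximalIdeal R := (IsLocalRing.mem_maximalIdeal b).mpr hb
          rw [pow_two, ← hab]
          exact Submodule.add_mem _ (Ideal.mul_mem_mul ham hum) (Ideal.mul_mem_mul hbm hvm)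
        refine ⟨u, le_antisymm ?_ ?_⟩
        · rw [huv]
          apply Ideal.span_le.mpr
          rintro w hw
          simp only [Set.mem_insert_iff, Set.mem_singleton_iff] at hw
          rcases hw with rfl | rfl
          · exact Ideal.subset_span (by simp)
          · obtain ⟨ub, hub⟩ := hb
            have h1 : x - a * u ∈ Ideal.span ({x, u} : Set R) := by
              apply Submodule.sub_mem
              · exact Ideal.subset_span (by simp)
              · exact Ideal.mul_mem_left _ _ (Ideal.subset_span (by simp))
            have h2 : (↑ub⁻¹ : R) * (x - a * u) = w := by
              have : x - a * u = b * w := by rw [← hab]; ring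
              rw [this, ← mul_assoc, ← hub, Units.inv_mul, one_mul]
            rw [← h2]
            exact Ideal.mul_mem_left _ _ h1
        · apply Ideal.span_le.mpr
          rintro w hw
          simp only [Set.mem_insert_iff, Set.mem_singleton_iff] at hw
          rcases hw with rfl | rfl
          · exact hx
          · exact hum
    have hym : y ∈ maximalIdeal R := hxy ▸ Ideal.subset_span (by simp)
    refine ⟨x, hx, le_antisymm ?_ ?_⟩
    · intro z hz
      rw [Ideal.mem_colon_span_singleton] at hz
      have hdecomp : z * x ∈ Ideal.span {x} * I ⊔ Ideal.span {y} * I := by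
        have : maximalIdeal R * I = Ideal.span {x} * I ⊔ Ideal.span {y} * I := by
          rw [hxy, Ideal.span_insert, Ideal.sup_mul]
        rwa [this] at hz
      obtain ⟨α, hα, β, hβ, hzx⟩ := Submodule.mem_sup.mp hdecomp
      obtain ⟨i, hi, hxi⟩ := Ideal.mem_span_singleton_mul.mp hα
      obtain ⟨j, hj, hyj⟩ := Ideal.mem_span_singleton_mul.mp hβ
      have hkey : x * (z - i) = y * j := by
        have h1 : z * x = x * i + y * j := by rw [← hzx, ← hxi, ← hyj]
        linear_combination h1
      have hzi : z - i ∈ Ideal.span ({y} : Set R) := by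
        apply aux_reg hdim x y hxy
        rw [hkey]
        exact Ideal.mul_mem_right j _ (Ideal.subset_span rfl)
      obtain ⟨c, hc⟩ := Ideal.mem_span_singleton'.mp hzi
      -- c * y = z - i
      have hyzero : y * (x * c - j) = 0 := by
        have h2 : x * (c * y) = y * j := by rw [hc]; exact hkey
        linear_combination h2
      rcases mul_eq_zero.mp hyzero with hy0 | hxc
      · have hzi0 : z - i = 0 := by rw [← hc, hy0]; ring
        rw [sub_eq_zero.mp hzi0]
        exact hi
      · have hcI : c ∈ I.colon (maximalIdeal R) := by
          rw [← hcol, Ideal.mem_colon_span_singleton]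
          have hxcj : x * c = j := by linear_combination hxc
          rw [mul_comm, hxcj]
          exact hj
        have hycI : c * y ∈ I := by
          have := Submodule.mem_colon.mp hcI y hym
          rwa [smul_eq_mul] at this
        have hz' : z = i + c * y := by rw [hc]; ring
        rw [hz']
        exact Submodule.add_mem _ hi hycI
    · intro z hz
      rw [Ideal.mem_colon_span_singleton]
      have : z * x = x * z := mul_comm z x
      rw [this]
      exact Ideal.mul_mem_mul hx hz
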